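/- Let h : ℝ → ℝ be six times continuously differentiable in a neighborhood of x ∈ ℝ and let s > 0 be fixed. With c(η) = (√(4η + 1) + 1)/(4·√(1 + η)) and η = s·Δx², the exact MQ-RBF reconstruction satisfies c(s·Δx²)·(h̄₀ + h̄₊) = h(x) + ((1/2)·s·h(x) + (1/6)·h''(x))·Δx² + (−(9/8)·s²·h(x) + (1/12)·s·h''(x) + (1/120)·h⁽⁴⁾(x))·Δx⁴ + O(Δx⁶). -/

import Mathlib

set_option maxHeartbeats 4000000

open Set intervalIntegral

/-- Quantitative second-order expansion of the MQ coefficient function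
`c(η) = (√(4η+1)+1)/(4√(1+η))`. -/
lemma sqrtA_bound (η : ℝ) (h0 : 0 ≤ η) (h1 : η ≤ 1) :
    |(Real.sqrt (4*η+1) + 1) / (4 * Real.sqrt (1+η)) - (1/2 + η/4 - 9/16*η^2)| ≤ 2 * η^3 := by
  have e1 : (0:ℝ) ≤ η*(1-η) := mul_nonneg h0 (by linarith)
  have e3 : (0:ℝ) ≤ η^3 := pow_nonneg h0 3
  have e4 : (0:ℝ) ≤ η^4 := pow_nonneg h0 4
  have e5 : (0:ℝ) ≤ η^5 := pow_nonneg h0 5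
  set a := Real.sqrt (4*η+1) with ha
  set b := Real.sqrt (1+η) with hb
  have ha2 : a^2 = 4*η+1 := Real.sq_sqrt (by linarith)
  have hb2 : b^2 = 1+η := Real.sq_sqrt (by linarith)
  have haL : 1 + 2*η - 2*η^2 ≤ a := by
    rw [ha, Real.le_sqrt (by nlinarith) (by linarith)]
    nlinarith [mul_nonneg (mul_nonneg e3 h0) (show (0:ℝ) ≤ 2-η by linarith)]
  have haU : a ≤ 1 + 2*η - 2*η^2 + 4*η^3 := by
    rw [ha, Real.sqrt_le_left (by nlinarith)]
    nlinarith [sq_nonneg (η^2*(1-η)), e4, e5]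
  have hbL : 1 + η/2 - η^2/8 ≤ b := by
    rw [hb, Real.le_sqrt (by nlinarith) (by linarith)]
    nlinarith [mul_nonneg e4 (show (0:ℝ) ≤ 4-η by linarith)]
  have hbU : b ≤ 1 + η/2 - η^2/8 + η^3/16 := by
    rw [hb, Real.sqrt_le_left (by nlinarith)]
    nlinarith [mul_nonneg e4 (show (0:ℝ) ≤ 5/64 - 1/64*η + 1/256*η^2 by nlinarith), e5]
  have ha1 : 1 ≤ a := by nlinarith
  have hb1 : 1 ≤ b := by nlinarith
  have hp : (0:ℝ) ≤ 2 + η - 9/4*η^2 := by nlinarith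
  have hq1 : (2 + η - 9/4*η^2) * (1 + η/2 - η^2/8) ≤ (2 + η - 9/4*η^2) * b :=
    mul_le_mul_of_nonneg_left hbL hp
  have hq2 : (2 + η - 9/4*η^2) * b ≤ (2 + η - 9/4*η^2) * (1 + η/2 - η^2/8 + η^3/16) :=
    mul_le_mul_of_nonneg_left hbU hp
  have key : |a + 1 - (2 + η - 9/4*η^2) * b| ≤ 8 * η^3 := by
    rw [abs_le]
    constructor
    · nlinarith [hq2, haL, mul_nonneg e3 (show (0:ℝ) ≤ 1-η by linarith), e5]
    · nlinarith [hq1, haU, e4]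
  have hb0 : (0:ℝ) < 4*b := by linarith
  have hrw : (a + 1) / (4*b) - (1/2 + η/4 - 9/16*η^2)
      = (a + 1 - (2 + η - 9/4*η^2) * b) / (4*b) := by
    field_simp; ring
  rw [hrw, abs_div, abs_of_pos hb0, div_le_iff₀ hb0]
  calc |a + 1 - (2 + η - 9/4*η^2) * b| ≤ 8 * η^3 := key
    _ ≤ 2*η^3 * (4*b) := by nlinarith

/-- Mean-value step: a primitive of a function bounded by `B|t|^k` that vanishes at 0
is bounded by `B|t|^(k+1)/(k+1)` on a symmetric interval. -/
lemma mvt_step {δ B : ℝ} (hB : 0 ≤ B) {k : ℕ} {ψ φ : ℝ → ℝ}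
    (hd : ∀ t ∈ Icc (-δ) δ, HasDerivAt ψ (φ t) t) (h0 : ψ 0 = 0)
    (hφ : ∀ t ∈ Icc (-δ) δ, |φ t| ≤ B * |t| ^ k) :
    ∀ t ∈ Icc (-δ) δ, |ψ t| ≤ B / (k + 1) * |t| ^ (k + 1) := by
  have habs : ∀ (σ y X : ℝ), σ = 1 ∨ σ = -1 → |y| ≤ X → -X ≤ σ * y ∧ σ * y ≤ X := by
    intro σ y X hσ hy
    rcases hσ with rfl | rfl
    · constructor <;> [linarith [neg_le_abs y]; linarith [le_abs_self y]]
    · constructor <;> [linarith [le_abs_self y]; linarith [neg_le_abs y]]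
  intro t ht
  rcases le_total 0 t with htp | htn
  · have hsub : Icc (0:ℝ) t ⊆ Icc (-δ) δ :=
      fun u hu => ⟨by linarith [hu.1, ht.1, ht.2], le_trans hu.2 ht.2⟩
    rw [abs_of_nonneg htp]
    have key : ∀ (σ : ℝ), σ = 1 ∨ σ = -1 → σ * ψ t ≤ B / (k+1) * t ^ (k+1) := by
      intro σ hσ
      set u : ℝ → ℝ := fun s => B / (k+1) * s ^ (k+1) - σ * ψ s with hu
      have hud : ∀ s ∈ Icc (0:ℝ) t, HasDerivAt u (B * s ^ k - σ * φ s) s := by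
        intro s hs
        have h1 := ((hasDerivAt_pow (k+1) s).const_mul (B/(k+1))).sub
          ((hd s (hsub hs)).const_mul σ)
        convert h1 using 1 <;> [rfl; rfl; rfl; skip]
        have : ((k:ℝ) + 1) ≠ 0 := by positivity
        push_cast [Nat.add_sub_cancel]
        field_simp
      have hmono : MonotoneOn u (Icc 0 t) := by
        apply monotoneOn_of_deriv_nonneg (convex_Icc 0 t)
        · exact fun s hs => (hud s hs).continuousAt.continuousWithinAt
        · intro s hs
          rw [interior_Icc] at hs
          exact ((hud s (Ioo_subset_Icc_self hs)).differentiableAt).differentiableWithinAt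
        · intro s hs
          rw [interior_Icc] at hs
          rw [(hud s (Ioo_subset_Icc_self hs)).deriv]
          have hsB := hφ s (hsub (Ioo_subset_Icc_self hs))
          rw [abs_of_nonneg (le_of_lt hs.1)] at hsB
          linarith [(habs σ (φ s) (B * s ^ k) hσ hsB).2]
      have := hmono ⟨le_refl _, htp⟩ ⟨htp, le_refl _⟩ htp
      simp only [hu, h0] at this
      simp at this
      linarith
    have h1 := key 1 (Or.inl rfl)
    have h2 := key (-1) (Or.inr rfl)
    rw [abs_le]; constructor <;> linarith
  · have hsub : Icc t (0:ℝ) ⊆ Icc (-δ) δ :=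
      fun u hu => ⟨le_trans ht.1 hu.1, by linarith [hu.2, ht.1, ht.2]⟩
    rw [abs_of_nonpos htn]
    have key : ∀ (σ : ℝ), σ = 1 ∨ σ = -1 → σ * ψ t ≤ B / (k+1) * (-t) ^ (k+1) := by
      intro σ hσ
      set u : ℝ → ℝ := fun s => B / (k+1) * (-s) ^ (k+1) - σ * ψ s with hu
      have hud : ∀ s ∈ Icc t (0:ℝ), HasDerivAt u (-(B * (-s) ^ k) - σ * φ s) s := by
        intro s hs
        have hpow : HasDerivAt (fun s : ℝ => (-s) ^ (k+1)) (((k:ℝ)+1) * (-s) ^ k * (-1)) s := by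
          have := (hasDerivAt_pow (k+1) (-s)).comp s (hasDerivAt_neg s)
          simpa [Function.comp_def] using this
        have h1 := (hpow.const_mul (B/(k+1))).sub ((hd s (hsub hs)).const_mul σ)
        convert h1 using 1 <;> [rfl; rfl; rfl; skip]
        have : ((k:ℝ) + 1) ≠ 0 := by positivity
        push_cast [Nat.add_sub_cancel]
        field_simp
      have hanti : AntitoneOn u (Icc t 0) := by
        apply antitoneOn_of_deriv_nonpos (convex_Icc t 0)
        · exact fun s hs => (hud s hs).continuousAt.continuousWithinAt
        · intro s hs
          rw [interior_Icc] at hs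
          exact ((hud s (Ioo_subset_Icc_self hs)).differentiableAt).differentiableWithinAt
        · intro s hs
          rw [interior_Icc] at hs
          rw [(hud s (Ioo_subset_Icc_self hs)).deriv]
          have hsB := hφ s (hsub (Ioo_subset_Icc_self hs))
          rw [abs_of_nonpos (le_of_lt hs.2)] at hsB
          linarith [(habs σ (φ s) (B * (-s) ^ k) hσ hsB).1]
      have := hanti ⟨le_refl _, htn⟩ ⟨htn, le_refl _⟩ htn
      simp only [hu, h0] at this
      simp at this
      linarith
    have h1 := key 1 (Or.inl rfl)
    have h2 := key (-1) (Or.inr rfl)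
    rw [abs_le]; constructor <;> linarith

/-- Taylor expansion with uniform remainder bound, proved by iterating `mvt_step`. -/
lemma taylor_chain {δ B : ℝ} (hB : 0 ≤ B) :
    ∀ (m : ℕ) (g : ℕ → ℝ → ℝ),
      (∀ k < m, ∀ t ∈ Icc (-δ) δ, HasDerivAt (g k) (g (k+1) t) t) →
      (∀ t ∈ Icc (-δ) δ, |g m t - g m 0| ≤ B) →
      ∀ t ∈ Icc (-δ) δ, |g 0 t - ∑ j ∈ Finset.range (m+1), g j 0 * t^j / (j.factorial : ℝ)|
        ≤ B * |t|^m / (m.factorial : ℝ) := by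
  intro m
  induction m with
  | zero =>
    intro g _ htop t ht
    simpa using htop t ht
  | succ m ih =>
    intro g hd htop t ht
    have ihg := ih (fun k => g (k+1)) (fun k hk => hd (k+1) (by omega)) htop
    set ψ : ℝ → ℝ := fun t => g 0 t - ∑ j ∈ Finset.range (m+2), g j 0 * t^j / (j.factorial : ℝ) with hψ
    set φ : ℝ → ℝ := fun t => g 1 t - ∑ j ∈ Finset.range (m+1), g (j+1) 0 * t^j / (j.factorial : ℝ) with hφdef
    have hsum : ∀ u : ℝ, HasDerivAt (fun t : ℝ => ∑ j ∈ Finset.range (m+2), g j 0 * t^j / (j.factorial : ℝ))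
        (∑ j ∈ Finset.range (m+1), g (j+1) 0 * u^j / (j.factorial : ℝ)) u := by
      intro u
      have h1 : HasDerivAt (fun t : ℝ => ∑ j ∈ Finset.range (m+2), g j 0 * t^j / (j.factorial : ℝ))
          (∑ j ∈ Finset.range (m+2), g j 0 * ((j:ℝ) * u^(j-1)) / (j.factorial : ℝ)) u := by
        apply HasDerivAt.fun_sum
        intro j _
        have := (hasDerivAt_pow j u).const_mul (g j 0 / (j.factorial : ℝ))
        convert this using 1 <;> [rfl; skip; ring_nf]
        ext t; ring
      convert h1 using 1
      symm
      rw [Finset.sum_range_succ']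
      norm_num
      apply Finset.sum_congr rfl
      intro i _
      have hfac : (((i+1).factorial : ℕ) : ℝ) = (i+1) * (i.factorial : ℝ) := by
        rw [Nat.factorial_succ]; push_cast; ring
      have h0 : (i.factorial : ℝ) ≠ 0 := Nat.cast_ne_zero.mpr (Nat.factorial_ne_zero i)
      have h1 : ((i:ℝ)+1) ≠ 0 := by positivity
      rw [hfac]
      field_simp
    have hder : ∀ u ∈ Icc (-δ) δ, HasDerivAt ψ (φ u) u := by
      intro u hu
      exact (hd 0 (by omega) u hu).sub (hsum u)
    have hψ0 : ψ 0 = 0 := by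
      simp only [hψ]
      rw [Finset.sum_range_succ']
      simp
    have hφb : ∀ u ∈ Icc (-δ) δ, |φ u| ≤ (B / (m.factorial : ℝ)) * |u|^m := by
      intro u hu
      have := ihg u hu
      simp only [hφdef]
      calc |g 1 u - ∑ j ∈ Finset.range (m+1), g (j+1) 0 * u^j / (j.factorial : ℝ)|
          ≤ B * |u|^m / (m.factorial : ℝ) := this
        _ = (B / (m.factorial : ℝ)) * |u|^m := by ring
    have hkey := mvt_step (by positivity) hder hψ0 hφb t ht
    calc |g 0 t - ∑ j ∈ Finset.range (m+1+1), g j 0 * t^j / (j.factorial : ℝ)| = |ψ t| := rfl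
      _ ≤ (B / (m.factorial : ℝ)) / (m+1) * |t|^(m+1) := hkey
      _ = B * |t|^(m+1) / ((m+1).factorial : ℝ) := by
          have h0 : (m.factorial : ℝ) ≠ 0 := Nat.cast_ne_zero.mpr (Nat.factorial_ne_zero m)
          have hf : ((m+1).factorial : ℝ) = ((m:ℝ)+1) * (m.factorial : ℝ) := by
            rw [Nat.factorial_succ]; push_cast; ring
          rw [hf, div_div, eq_div_iff (by positivity), div_mul_eq_mul_div,
            div_mul_eq_mul_div, div_eq_iff (by positivity)]
          ring

lemma alg_id (A F d s c0 c2 c4 : ℝ) (hd0 : d ≠ 0) :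
    A * (F/d) - c0 - ((1/2)*s*c0 + (1/6)*c2)*d^2
      - (-(9/8)*s^2*c0 + (1/12)*s*c2 + (1/120)*c4)*d^4
    = A*(F - (2*c0*d + c2*d^3/3 + c4*d^5/60))/d
      + (A - (1/2 + (s*d^2)/4 - 9/16*(s*d^2)^2))*(2*c0 + c2*d^2/3 + c4*d^4/60)
      + ((s*c4/240 - 3*s^2*c2/16)*d^6 - (3*s^2*c4/320)*d^8) := by
  field_simp
  ring

/-- Expansion of the exact-coefficient k = 2 MQ-RBF reconstruction:
`c(sΔx²)(h̄₀ + h̄₊) = h(x) + ((1/2)s·h + (1/6)h'')Δx²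
  + (−(9/8)s²h + (1/12)s·h'' + (1/120)h⁽⁴⁾)Δx⁴ + O(Δx⁶)`. -/
theorem stmt_6 (h : ℝ → ℝ) (x : ℝ) (hh : ContDiffAt ℝ 6 h x) (s : ℝ) (hs : 0 < s) :
    ∃ C > 0, ∃ d₀ > 0, ∀ d : ℝ, 0 < d → d < d₀ →
      |(Real.sqrt (4 * (s * d ^ 2) + 1) + 1) / (4 * Real.sqrt (1 + s * d ^ 2))
            * ((1 / d) * (∫ ξ in (x - d)..x, h ξ) + (1 / d) * ∫ ξ in x..(x + d), h ξ)
          - h x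
          - ((1 / 2) * s * h x + (1 / 6) * iteratedDeriv 2 h x) * d ^ 2
          - (-(9 / 8) * s ^ 2 * h x + (1 / 12) * s * iteratedDeriv 2 h x
              + (1 / 120) * iteratedDeriv 4 h x) * d ^ 4|
        ≤ C * d ^ 6 := by
  -- Notation for the derivatives at x
  set c1 := iteratedDeriv 1 h x with hc1
  set c2 := iteratedDeriv 2 h x with hc2
  set c3 := iteratedDeriv 3 h x with hc3
  set c4 := iteratedDeriv 4 h x with hc4
  set c5 := iteratedDeriv 5 h x with hc5
  set c6 := iteratedDeriv 6 h x with hc6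
  -- Obtain a ball where h is C⁶
  obtain ⟨u, hu_nhds, hu⟩ := hh.contDiffOn le_rfl (by simp)
  obtain ⟨ε, hε, hball⟩ := Metric.mem_nhds_iff.mp hu_nhds
  set V := Metric.ball x ε with hVdef
  have hVopen : IsOpen V := Metric.isOpen_ball
  have hV : ContDiffOn ℝ 6 h V := hu.mono hball
  have hUD : UniqueDiffOn ℝ V := hVopen.uniqueDiffOn
  set δ := ε/2 with hδdef
  have hδpos : 0 < δ := by positivity
  have hmemV : ∀ y : ℝ, |y - x| ≤ δ → y ∈ V := by
    intro y hy
    simp only [hVdef, Metric.mem_ball, Real.dist_eq]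
    calc |y - x| ≤ δ := hy
      _ < ε := by simp only [hδdef]; linarith
  have hKV : Icc (x-δ) (x+δ) ⊆ V := by
    intro y hy
    exact hmemV y (abs_le.mpr ⟨by linarith [hy.1], by linarith [hy.2]⟩)
  -- iterated derivatives within V agree with global ones
  have hEq : ∀ (n:ℕ), Set.EqOn (iteratedDerivWithin n h V) (iteratedDeriv n h) V := by
    intro n y hy
    rw [iteratedDerivWithin_eq_iteratedFDerivWithin, iteratedDeriv_eq_iteratedFDeriv,
      iteratedFDerivWithin_of_isOpen n hVopen hy]
  have hHD : ∀ k : ℕ, k < 6 → ∀ y ∈ V, HasDerivAt (iteratedDeriv k h) (iteratedDeriv (k+1) h y) y := by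
    intro k hk y hy
    have h1 : DifferentiableWithinAt ℝ (iteratedDerivWithin k h V) V y :=
      hV.differentiableOn_iteratedDerivWithin (by exact_mod_cast hk) hUD y hy
    have h2 : DifferentiableWithinAt ℝ (iteratedDeriv k h) V y :=
      h1.congr (fun z hz => (hEq k hz).symm) ((hEq k hy).symm)
    have h3 : DifferentiableAt ℝ (iteratedDeriv k h) y := h2.differentiableAt (hVopen.mem_nhds hy)
    rw [iteratedDeriv_succ]
    exact h3.hasDerivAt
  -- continuity of the 6th derivative and a bound B
  have hc6cont : ContinuousOn (iteratedDeriv 6 h) V :=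
    ((hV.continuousOn_iteratedDerivWithin (by norm_num) hUD).congr (fun z hz => (hEq 6 hz).symm))
  have hcont : ContinuousOn h (Icc (x-δ) (x+δ)) := (hV.continuousOn).mono hKV
  obtain ⟨B0, hB0⟩ := (isCompact_Icc : IsCompact (Icc (x-δ) (x+δ))).exists_bound_of_continuousOn
    ((hc6cont.mono hKV).sub continuousOn_const)
  set B := max B0 0 with hBdef
  have hB : 0 ≤ B := le_max_right _ _
  -- Taylor chain for g k t = iteratedDeriv k h (x+t)
  have hder : ∀ k < 6, ∀ t ∈ Icc (-δ) δ,
      HasDerivAt (fun t => iteratedDeriv k h (x+t)) (iteratedDeriv (k+1) h (x+t)) t := by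
    intro k hk t ht
    have hyV : x + t ∈ V := hmemV (x+t) (by rw [add_sub_cancel_left]; exact abs_le.mpr ⟨ht.1, ht.2⟩)
    have := (hHD k hk (x+t) hyV).comp t ((hasDerivAt_id t).const_add x)
    simpa [Function.comp_def] using this
  have htop : ∀ t ∈ Icc (-δ) δ, |iteratedDeriv 6 h (x+t) - iteratedDeriv 6 h (x+0)| ≤ B := by
    intro t ht
    have hyK : x + t ∈ Icc (x-δ) (x+δ) := ⟨by linarith [ht.1], by linarith [ht.2]⟩
    have := hB0 (x+t) hyK
    simp only [Real.norm_eq_abs] at this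
    rw [add_zero]
    calc |iteratedDeriv 6 h (x+t) - iteratedDeriv 6 h x| ≤ B0 := this
      _ ≤ B := le_max_left _ _
  have hchain := taylor_chain hB 6 (fun k t => iteratedDeriv k h (x+t)) hder htop
  -- explicit Taylor polynomial bound
  set M := (B + |c6|)/720 with hMdef
  have hM : 0 ≤ M := by positivity
  set T : ℝ → ℝ := fun ξ => h x + c1*(ξ-x) + c2*(ξ-x)^2/2 + c3*(ξ-x)^3/6
    + c4*(ξ-x)^4/24 + c5*(ξ-x)^5/120 with hTdef
  have hTay : ∀ ξ ∈ Icc (x-δ) (x+δ), |h ξ - T ξ| ≤ M * |ξ-x|^6 := by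
    intro ξ hξ
    have ht : ξ - x ∈ Icc (-δ) δ := ⟨by linarith [hξ.1], by linarith [hξ.2]⟩
    have H := hchain (ξ-x) ht
    simp only [add_zero] at H
    have hxξ : x + (ξ - x) = ξ := by ring
    rw [hxξ] at H
    rw [show iteratedDeriv 0 h ξ = h ξ from by rw [iteratedDeriv_zero]] at H
    have hsum7 : ∑ j ∈ Finset.range 7, iteratedDeriv j h x * (ξ-x)^j / ((j.factorial : ℕ) : ℝ)
        = T ξ + c6*(ξ-x)^6/720 := by
      rw [Finset.sum_range_succ, Finset.sum_range_succ, Finset.sum_range_succ,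
        Finset.sum_range_succ, Finset.sum_range_succ, Finset.sum_range_succ,
        Finset.sum_range_succ, Finset.sum_range_zero]
      rw [show iteratedDeriv 0 h x = h x from by rw [iteratedDeriv_zero], ← hc1, ← hc2, ← hc3,
        ← hc4, ← hc5, ← hc6]
      simp only [hTdef]
      norm_num [Nat.factorial]
      try ring
    rw [hsum7] at H
    have hfact : ((Nat.factorial 6 : ℕ) : ℝ) = 720 := by norm_num [Nat.factorial]
    rw [hfact] at H
    have habs6 : |c6*(ξ-x)^6/720| = |c6| * |ξ-x|^6 / 720 := by
      rw [abs_div, abs_mul, abs_pow]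
      norm_num
    calc |h ξ - T ξ| = |(h ξ - (T ξ + c6*(ξ-x)^6/720)) + c6*(ξ-x)^6/720| := by ring_nf
      _ ≤ |h ξ - (T ξ + c6*(ξ-x)^6/720)| + |c6*(ξ-x)^6/720| := abs_add_le _ _
      _ ≤ B * |ξ-x|^6 / 720 + |c6| * |ξ-x|^6 / 720 := by rw [habs6]; linarith [H]
      _ = M * |ξ-x|^6 := by rw [hMdef]; ring
  -- constants
  set N := 2*|h x| + |c2| + |c4| with hNdef
  set N2 := s*|c4|/240 + 3*s^2*|c2|/16 + 3*s^2*|c4|/320 with hN2def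
  set C := 2*M + 2*s^3*N + N2 + 1 with hCdef
  have hM720 : 0 ≤ M := hM
  have hN : 0 ≤ N := by
    rw [hNdef]
    have := abs_nonneg (h x); have := abs_nonneg c2; have := abs_nonneg c4
    linarith
  have hN2 : 0 ≤ N2 := by
    rw [hN2def]
    have h1 : 0 ≤ s*|c4|/240 := by
      have := abs_nonneg c4; have := hs.le; positivity
    have h2 : 0 ≤ 3*s^2*|c2|/16 := by
      have := abs_nonneg c2; positivity
    have h3 : 0 ≤ 3*s^2*|c4|/320 := by
      have := abs_nonneg c4; positivity
    linarith
  have hC : 0 < C := by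
    rw [hCdef]
    have h1 : 0 ≤ 2*s^3*N := mul_nonneg (by positivity) hN
    linarith
  have hss : (0:ℝ) < Real.sqrt s := Real.sqrt_pos.mpr hs
  refine ⟨C, hC, min δ (min 1 (Real.sqrt s)⁻¹), lt_min hδpos (lt_min one_pos (inv_pos.mpr hss)), ?_⟩
  intro d hd hdlt
  have hdδ : d ≤ δ := le_of_lt (lt_of_lt_of_le hdlt (min_le_left _ _))
  have hd1 : d ≤ 1 := le_of_lt (lt_of_lt_of_le hdlt ((min_le_right _ _).trans (min_le_left _ _)))
  have hdsq : d < (Real.sqrt s)⁻¹ := lt_of_lt_of_le hdlt ((min_le_right _ _).trans (min_le_right _ _))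
  have hη1 : s * d^2 ≤ 1 := by
    have h1 : d^2 ≤ ((Real.sqrt s)⁻¹)^2 := pow_le_pow_left₀ hd.le hdsq.le 2
    have h2 : ((Real.sqrt s)⁻¹)^2 = s⁻¹ := by
      rw [inv_pow, Real.sq_sqrt (le_of_lt hs)]
    rw [h2] at h1
    calc s * d^2 ≤ s * s⁻¹ := mul_le_mul_of_nonneg_left h1 hs.le
      _ = 1 := mul_inv_cancel₀ (ne_of_gt hs)
  have hη0 : 0 ≤ s * d^2 := by positivity
  -- the coefficient A
  set A := (Real.sqrt (4 * (s * d ^ 2) + 1) + 1) / (4 * Real.sqrt (1 + s * d ^ 2)) with hAdef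
  set qA := 1/2 + (s*d^2)/4 - 9/16*(s*d^2)^2 with hqAdef
  have hA : |A - qA| ≤ 2*s^3*d^6 := by
    have := sqrtA_bound (s*d^2) hη0 hη1
    have h2 : 2*(s*d^2)^3 = 2*s^3*d^6 := by ring
    rw [h2] at this
    exact this
  have hden1 : 1 ≤ Real.sqrt (1 + s*d^2) := by
    rw [Real.le_sqrt (by norm_num) (by positivity)]
    rw [one_pow]
    linarith [hη0]
  have hA1 : |A| ≤ 1 := by
    have hnum : Real.sqrt (4*(s*d^2)+1) ≤ 3 := by
      rw [Real.sqrt_le_left (by norm_num)]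
      norm_num
      linarith [hη1]
    have hA0 : 0 ≤ A := by
      rw [hAdef]
      have := Real.sqrt_nonneg (4*(s*d^2)+1)
      have := Real.sqrt_nonneg (1+s*d^2)
      positivity
    rw [abs_of_nonneg hA0, hAdef, div_le_one (by linarith [hden1])]
    linarith [Real.sqrt_nonneg (4*(s*d^2)+1), hnum, hden1]
  -- the integrals
  have hsub1 : uIcc (x-d) x ⊆ Icc (x-δ) (x+δ) := by
    rw [uIcc_of_le (by linarith)]
    exact Icc_subset_Icc (by linarith) (by linarith)
  have hsub2 : uIcc x (x+d) ⊆ Icc (x-δ) (x+δ) := by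
    rw [uIcc_of_le (by linarith)]
    exact Icc_subset_Icc (by linarith) (by linarith)
  have hsub12 : uIcc (x-d) (x+d) ⊆ Icc (x-δ) (x+δ) := by
    rw [uIcc_of_le (by linarith)]
    exact Icc_subset_Icc (by linarith) (by linarith)
  have i1 : IntervalIntegrable h MeasureTheory.volume (x-d) x :=
    (hcont.mono hsub1).intervalIntegrable
  have i2 : IntervalIntegrable h MeasureTheory.volume x (x+d) :=
    (hcont.mono hsub2).intervalIntegrable
  have i12 : IntervalIntegrable h MeasureTheory.volume (x-d) (x+d) :=
    (hcont.mono hsub12).intervalIntegrable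
  set F := ∫ ξ in (x-d)..(x+d), h ξ with hFdef
  have hFval : (∫ ξ in (x-d)..x, h ξ) + (∫ ξ in x..(x+d), h ξ) = F :=
    integral_add_adjacent_intervals i1 i2
  -- integral of the Taylor polynomial
  have hTcont : Continuous T := by
    simp only [hTdef]
    fun_prop
  have iT : IntervalIntegrable T MeasureTheory.volume (x-d) (x+d) :=
    hTcont.intervalIntegrable _ _
  set qF := 2*(h x)*d + c2*d^3/3 + c4*d^5/60 with hqFdef
  have hTint : (∫ ξ in (x-d)..(x+d), T ξ) = qF := by
    have hQ : ∀ ξ ∈ uIcc (x-d) (x+d), HasDerivAt (fun ξ => h x*(ξ-x) + c1*(ξ-x)^2/2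
        + c2*(ξ-x)^3/6 + c3*(ξ-x)^4/24 + c4*(ξ-x)^5/120 + c5*(ξ-x)^6/720) (T ξ) ξ := by
      intro ξ _
      have hb : HasDerivAt (fun ξ : ℝ => ξ - x) 1 ξ := (hasDerivAt_id ξ).sub_const x
      have H := (((((((hb.const_mul (h x)).add ((hb.pow 2).const_mul (c1/2))).add
        ((hb.pow 3).const_mul (c2/6))).add ((hb.pow 4).const_mul (c3/24))).add
        ((hb.pow 5).const_mul (c4/120))).add ((hb.pow 6).const_mul (c5/720))))
      convert H using 1 <;> [rfl; rfl; skip; skip]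
      · ext ζ; simp only [Pi.add_apply, Pi.pow_apply]; ring
      · rw [hTdef]
        push_cast
        ring_nf
    rw [integral_eq_sub_of_hasDerivAt hQ iT]
    simp only [hqFdef]
    ring
  -- bound on F - qF
  have hFb : |F - qF| ≤ 2*M*d^7 := by
    have hdiff : F - qF = ∫ ξ in (x-d)..(x+d), (h ξ - T ξ) := by
      rw [integral_sub i12 iT, hTint]
    rw [hdiff]
    have hbound : ∀ ξ ∈ uIoc (x-d) (x+d), ‖h ξ - T ξ‖ ≤ M * d^6 := by
      intro ξ hξ
      have hξI : ξ ∈ Icc (x-δ) (x+δ) := hsub12 (uIoc_subset_uIcc hξ)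
      have hξd : |ξ - x| ≤ d := by
        rw [uIoc_of_le (by linarith)] at hξ
        rw [abs_le]
        constructor <;> [linarith [hξ.1]; linarith [hξ.2]]
      have h6 : |ξ-x|^6 ≤ d^6 := by
        apply pow_le_pow_left₀ (abs_nonneg _) hξd
      calc ‖h ξ - T ξ‖ = |h ξ - T ξ| := rfl
        _ ≤ M * |ξ-x|^6 := hTay ξ hξI
        _ ≤ M * d^6 := mul_le_mul_of_nonneg_left h6 hM
    have := intervalIntegral.norm_integral_le_of_norm_le_const hbound
    rw [show |(x+d) - (x-d)| = 2*d by rw [abs_of_pos (by linarith)]; ring] at this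
    calc |∫ ξ in (x-d)..(x+d), (h ξ - T ξ)| ≤ M * d^6 * (2*d) := this
      _ = 2*M*d^7 := by ring
  clear_value c1 c2 c3 c4 c5 c6 B M T N N2 C A qA F qF
  -- assembly
  have hrw1 : (1/d) * (∫ ξ in (x-d)..x, h ξ) + (1/d) * (∫ ξ in x..(x+d), h ξ) = F/d := by
    rw [← hFval]; ring
  rw [hrw1]
  have hid := alg_id A F d s (h x) c2 c4 (ne_of_gt hd)
  rw [← hqFdef, ← hqAdef] at hid
  rw [hid]
  have hb1 : |A*(F - qF)/d| ≤ 2*M*d^6 := by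
    rw [abs_div, abs_mul, abs_of_pos hd, div_le_iff₀ hd]
    calc |A| * |F - qF| ≤ 1 * (2*M*d^7) :=
      mul_le_mul hA1 hFb (abs_nonneg _) (by norm_num)
      _ = 2*M*d^6*d := by ring
  have hX : |2*(h x) + c2*d^2/3 + c4*d^4/60| ≤ N := by
    have e2 : |c2*d^2/3| = |c2| *d^2/3 := by
      rw [abs_div, abs_mul, abs_pow, abs_of_pos hd]; norm_num
    have e4 : |c4*d^4/60| = |c4| *d^4/60 := by
      rw [abs_div, abs_mul, abs_pow, abs_of_pos hd]; norm_num
    have hd2 : d^2 ≤ 1 := pow_le_one₀ hd.le hd1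
    have hd4 : d^4 ≤ 1 := pow_le_one₀ hd.le hd1
    calc |2*(h x) + c2*d^2/3 + c4*d^4/60|
        ≤ |2*(h x) + c2*d^2/3| + |c4*d^4/60| := abs_add_le _ _
      _ ≤ |2*(h x)| + |c2*d^2/3| + |c4*d^4/60| := by linarith [abs_add_le (2*(h x)) (c2*d^2/3)]
      _ = 2*|h x| + |c2| *d^2/3 + |c4| *d^4/60 := by rw [e2, e4, abs_mul]; norm_num
      _ ≤ N := by
          have p2 : |c2| * d^2 ≤ |c2| := by
            calc |c2| * d^2 ≤ |c2| * 1 := mul_le_mul_of_nonneg_left hd2 (abs_nonneg c2)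
              _ = |c2| := mul_one _
          have p4 : |c4| * d^4 ≤ |c4| := by
            calc |c4| * d^4 ≤ |c4| * 1 := mul_le_mul_of_nonneg_left hd4 (abs_nonneg c4)
              _ = |c4| := mul_one _
          rw [hNdef]
          linarith [abs_nonneg (h x), abs_nonneg c2, abs_nonneg c4]
  have hb2 : |(A - qA)*(2*(h x) + c2*d^2/3 + c4*d^4/60)| ≤ 2*s^3*N*d^6 := by
    rw [abs_mul]
    calc |A - qA| * |2*(h x) + c2*d^2/3 + c4*d^4/60|
        ≤ (2*s^3*d^6) * N := mul_le_mul hA hX (abs_nonneg _) (by positivity)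
      _ = 2*s^3*N*d^6 := by ring
  have hb3 : |(s*c4/240 - 3*s^2*c2/16)*d^6 - (3*s^2*c4/320)*d^8| ≤ N2*d^6 := by
    have h86 : d^8 ≤ d^6 := pow_le_pow_of_le_one hd.le hd1 (by norm_num)
    have e6 : (0:ℝ) ≤ d^6 := by positivity
    have k1 : |(s*c4/240 - 3*s^2*c2/16)*d^6| = |s*c4/240 - 3*s^2*c2/16| *d^6 := by
      rw [abs_mul, abs_pow, abs_of_pos hd]
    have k2 : |(3*s^2*c4/320)*d^8| = (3*s^2*|c4|/320)*d^8 := by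
      rw [abs_mul, abs_pow, abs_of_pos hd, abs_div, abs_mul, abs_mul]
      rw [abs_of_nonneg (by positivity : (0:ℝ) ≤ s^2)]
      norm_num
    have k3 : |s*c4/240 - 3*s^2*c2/16| ≤ s*|c4|/240 + 3*s^2*|c2|/16 := by
      have := abs_sub (s*c4/240) (3*s^2*c2/16)
      have j1 : |s*c4/240| = s*|c4|/240 := by
        rw [abs_div, abs_mul, abs_of_pos hs]; norm_num
      have j2 : |3*s^2*c2/16| = 3*s^2*|c2|/16 := by
        rw [abs_div, abs_mul, abs_mul, abs_of_nonneg (by positivity : (0:ℝ) ≤ s^2)]; norm_num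
      rw [j1, j2] at this
      exact this
    calc |(s*c4/240 - 3*s^2*c2/16)*d^6 - (3*s^2*c4/320)*d^8|
        ≤ |(s*c4/240 - 3*s^2*c2/16)*d^6| + |(3*s^2*c4/320)*d^8| := abs_sub _ _
      _ = |s*c4/240 - 3*s^2*c2/16| *d^6 + (3*s^2*|c4|/320)*d^8 := by rw [k1, k2]
      _ ≤ (s*|c4|/240 + 3*s^2*|c2|/16)*d^6 + (3*s^2*|c4|/320)*d^6 := by
          have hcc : (0:ℝ) ≤ 3*s^2*|c4|/320 := by
            have := abs_nonneg c4; positivity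
          linarith [mul_le_mul_of_nonneg_right k3 e6, mul_le_mul_of_nonneg_left h86 hcc]
      _ = N2*d^6 := by simp only [hN2def]; ring
  calc |A*(F - qF)/d + (A - qA)*(2*(h x) + c2*d^2/3 + c4*d^4/60)
        + ((s*c4/240 - 3*s^2*c2/16)*d^6 - (3*s^2*c4/320)*d^8)|
      ≤ |A*(F - qF)/d + (A - qA)*(2*(h x) + c2*d^2/3 + c4*d^4/60)|
        + |(s*c4/240 - 3*s^2*c2/16)*d^6 - (3*s^2*c4/320)*d^8| := abs_add_le _ _
    _ ≤ |A*(F - qF)/d| + |(A - qA)*(2*(h x) + c2*d^2/3 + c4*d^4/60)|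
        + |(s*c4/240 - 3*s^2*c2/16)*d^6 - (3*s^2*c4/320)*d^8| := by
        linarith [abs_add_le (A*(F - qF)/d) ((A - qA)*(2*(h x) + c2*d^2/3 + c4*d^4/60))]
    _ ≤ 2*M*d^6 + 2*s^3*N*d^6 + N2*d^6 := by linarith
    _ ≤ C * d^6 := by
        rw [hCdef]
        linarith [pow_pos hd 6]
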